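/- Let f be a nonzero polynomial in R[x_1,...,x_n] that is a sum of squares of polynomials, let A be a nonzero vector of nonnegative integers, and let v = min over exponents α in the support of f of the dot product A·α. Then v is even, and the A-lowest part f_v of f (the sum of terms f_α x^α with A·α = v) is itself a sum of squares of polynomials. -/

import Mathlib

open MvPolynomial

/-- The `A`-weight of an exponent vector. -/
def wtA {n : ℕ} (A : Fin n → ℕ) (α : Fin n →₀ ℕ) : ℕ := ∑ i, A i * α i

/-- The part of `f` consisting of terms of `A`-weight exactly `v`. -/
noncomputable def weightPart {n : ℕ} (A : Fin n → ℕ) (v : ℕ) (f : MvPolynomial (Fin n) ℝ) :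
    MvPolynomial (Fin n) ℝ :=
  ∑ α ∈ f.support.filter (fun α => wtA A α = v), monomial α (coeff α f)

lemma wtA_add {n : ℕ} (A : Fin n → ℕ) (α β : Fin n →₀ ℕ) :
    wtA A (α + β) = wtA A α + wtA A β := by
  simp [wtA, mul_add, Finset.sum_add_distrib]

lemma coeff_weightPart {n : ℕ} (A : Fin n → ℕ) (v : ℕ) (f : MvPolynomial (Fin n) ℝ)
    (α : Fin n →₀ ℕ) :
    coeff α (weightPart A v f) = if wtA A α = v then coeff α f else 0 := by
  rw [weightPart, coeff_sum]
  simp only [coeff_monomial]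
  rw [Finset.sum_ite_eq' (f.support.filter (fun β => wtA A β = v)) α (fun β => coeff β f)]
  simp only [Finset.mem_filter, mem_support_iff]
  split_ifs with h1 h2 h2 <;> simp_all

lemma coeff_msum {n : ℕ} (α : Fin n →₀ ℕ) (m : Multiset (MvPolynomial (Fin n) ℝ)) :
    coeff α m.sum = (m.map fun p => coeff α p).sum := by
  simpa using map_multiset_sum (lcoeff ℝ α) m

lemma multiset_sum_sq_real {m : Multiset ℝ} (h : (m.map fun x => x * x).sum = 0) :
    ∀ x ∈ m, x = 0 := by
  induction m using Multiset.induction with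
  | empty => simp
  | cons a s ih =>
    have h2 : (0:ℝ) ≤ (s.map fun x => x * x).sum := by
      apply Multiset.sum_nonneg
      intro x hx
      obtain ⟨y, _, rfl⟩ := Multiset.mem_map.mp hx
      exact mul_self_nonneg y
    simp only [Multiset.map_cons, Multiset.sum_cons] at h
    have ha : a = 0 := by nlinarith [mul_self_nonneg a]
    intro x hx
    rcases Multiset.mem_cons.mp hx with rfl | hx
    · exact ha
    · exact ih (by nlinarith [mul_self_nonneg a]) x hx

lemma sos_poly_zero {n : ℕ} (m : Multiset (MvPolynomial (Fin n) ℝ))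
    (h : (m.map fun g => g * g).sum = 0) : ∀ g ∈ m, g = 0 := by
  intro g hg
  have key : ∀ x : Fin n → ℝ, eval x g = 0 := by
    intro x
    have h' := congrArg (eval x) h
    rw [map_multiset_sum, Multiset.map_map] at h'
    simp only [Function.comp, map_mul, map_zero] at h'
    have h'' : ((m.map (eval x)).map fun y => y * y).sum = 0 := by
      rw [Multiset.map_map]
      exact h'
    exact multiset_sum_sq_real h'' (eval x g) (Multiset.mem_map_of_mem _ hg)
  apply MvPolynomial.funext (q := 0)
  simpa using key

lemma isSumSq_multiset {R : Type*} [AddCommMonoid R] [Mul R] (m : Multiset R) :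
    IsSumSq (m.map fun g => g * g).sum := by
  induction m using Multiset.induction with
  | empty => simpa using IsSumSq.zero
  | cons a s ih =>
    simp only [Multiset.map_cons, Multiset.sum_cons]
    exact IsSumSq.sq_add _ ih

lemma IsSumSq.exists_multiset {R : Type*} [AddCommMonoid R] [Mul R] {s : R}
    (h : IsSumSq s) : ∃ m : Multiset R, s = (m.map fun g => g * g).sum := by
  induction h with
  | zero => exact ⟨0, by simp⟩
  | @sq_add a S pS ih =>
    obtain ⟨m, rfl⟩ := ih
    exact ⟨a ::ₘ m, by simp⟩

/-- If a nonzero polynomial `f` is a sum of squares, `A` is a nonzero nonnegative integer weight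
vector and `v` is the minimal `A`-weight of an exponent in the support of `f`, then `v` is even
and the `A`-lowest part of `f` is a sum of squares of polynomials. -/
theorem lowest_part_of_sos (n : ℕ) (f : MvPolynomial (Fin n) ℝ) (hf : f ≠ 0)
    (hsos : IsSumSq f) (A : Fin n → ℕ) (hA : A ≠ 0) (v : ℕ)
    (hv : IsLeast {w | ∃ α ∈ f.support, wtA A α = w} v) :
    Even v ∧ IsSumSq (weightPart A v f) := by
  obtain ⟨m, hm⟩ := hsos.exists_multiset
  -- the set of weights appearing in supports of the g's
  set WS : Set ℕ := {w | ∃ g ∈ m, ∃ α ∈ g.support, wtA A α = w} with hWS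
  have hne : WS.Nonempty := by
    obtain ⟨α, hα⟩ := ne_zero_iff.mp hf
    have hsum : coeff α f = (m.map fun g => coeff α (g * g)).sum := by
      rw [hm, coeff_msum, Multiset.map_map]; rfl
    have : ∃ g ∈ m, coeff α (g * g) ≠ 0 := by
      by_contra hc
      push_neg at hc
      apply hα
      rw [hsum, Multiset.sum_eq_zero]
      intro x hx
      obtain ⟨g, hg, rfl⟩ := Multiset.mem_map.mp hx
      exact hc g hg
    obtain ⟨g, hg, hgα⟩ := this
    have hgne : g ≠ 0 := by rintro rfl; simp at hgα
    obtain ⟨β, hβ⟩ := ne_zero_iff.mp hgne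
    exact ⟨wtA A β, g, hg, β, mem_support_iff.mpr hβ, rfl⟩
  set μ := sInf WS with hμ
  obtain ⟨g₀, hg₀, α₀, hα₀s, hα₀⟩ := Nat.sInf_mem hne
  have hμle : ∀ g ∈ m, ∀ β, coeff β g ≠ 0 → μ ≤ wtA A β := by
    intro g hg β hβ
    exact Nat.sInf_le ⟨g, hg, β, mem_support_iff.mpr hβ, rfl⟩
  set L : MvPolynomial (Fin n) ℝ → MvPolynomial (Fin n) ℝ := fun g => weightPart A μ g with hL
  set S : MvPolynomial (Fin n) ℝ := (m.map fun g => L g * L g).sum with hS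
  -- coefficients of L g
  have hLcoeff : ∀ g β, coeff β (L g) = if wtA A β = μ then coeff β g else 0 := by
    intro g β; exact coeff_weightPart A μ g β
  -- S is homogeneous of weight 2μ
  have hom : ∀ α : Fin n →₀ ℕ, wtA A α ≠ 2 * μ → coeff α S = 0 := by
    intro α hα
    rw [hS, coeff_msum, Multiset.map_map]
    apply Multiset.sum_eq_zero
    intro x hx
    obtain ⟨g, hg, rfl⟩ := Multiset.mem_map.mp hx
    show coeff α (L g * L g) = 0
    rw [coeff_mul]
    apply Finset.sum_eq_zero
    intro p hp
    rcases eq_or_ne (coeff p.1 (L g)) 0 with h1 | h1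
    · rw [h1, zero_mul]
    rcases eq_or_ne (coeff p.2 (L g)) 0 with h2 | h2
    · rw [h2, mul_zero]
    exfalso
    rw [hLcoeff] at h1 h2
    have w1 : wtA A p.1 = μ := by by_contra hc; simp [hc] at h1
    have w2 : wtA A p.2 = μ := by by_contra hc; simp [hc] at h2
    have hadd := Finset.HasAntidiagonal.mem_antidiagonal.mp hp
    apply hα
    rw [← hadd, wtA_add, w1, w2]; ring
  -- below weight 2μ+1, f and S agree
  have low : ∀ α : Fin n →₀ ℕ, wtA A α ≤ 2 * μ → coeff α f = coeff α S := by
    intro α hα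
    rw [hm, hS, coeff_msum, coeff_msum, Multiset.map_map, Multiset.map_map]
    congr 1
    apply Multiset.map_congr rfl
    intro g hg
    show coeff α (g * g) = coeff α (L g * L g)
    rw [coeff_mul, coeff_mul]
    apply Finset.sum_congr rfl
    intro p hp
    rcases eq_or_ne (coeff p.1 g) 0 with h1 | h1
    · rw [h1, zero_mul, hLcoeff]
      split_ifs with h <;> simp [h1]
    rcases eq_or_ne (coeff p.2 g) 0 with h2 | h2
    · rw [h2, mul_zero, hLcoeff, hLcoeff]
      split_ifs with h h' <;> simp [h2]
    have w1 := hμle g hg p.1 h1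
    have w2 := hμle g hg p.2 h2
    have hadd := Finset.HasAntidiagonal.mem_antidiagonal.mp hp
    have hsum : wtA A p.1 + wtA A p.2 = wtA A α := by rw [← wtA_add, hadd]
    have e1 : wtA A p.1 = μ := by omega
    have e2 : wtA A p.2 = μ := by omega
    rw [hLcoeff, hLcoeff, if_pos e1, if_pos e2]
  -- S ≠ 0
  have hSne : S ≠ 0 := by
    intro hzero
    have hLg₀ : L g₀ ≠ 0 := by
      intro hc
      have hcc := hLcoeff g₀ α₀
      rw [hc] at hcc
      simp only [coeff_zero] at hcc
      rw [if_pos hα₀] at hcc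
      exact mem_support_iff.mp hα₀s hcc.symm
    have hall : ∀ p ∈ m.map L, p = 0 := by
      apply sos_poly_zero
      rw [Multiset.map_map]
      rw [hS] at hzero
      exact hzero
    exact hLg₀ (hall (L g₀) (Multiset.mem_map_of_mem _ hg₀))
  obtain ⟨α₁, hα₁⟩ := ne_zero_iff.mp hSne
  have hw₁ : wtA A α₁ = 2 * μ := by
    by_contra hc; exact hα₁ (hom α₁ hc)
  have hmem : 2 * μ ∈ {w | ∃ α ∈ f.support, wtA A α = w} := by
    refine ⟨α₁, mem_support_iff.mpr ?_, hw₁⟩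
    rw [low α₁ (le_of_eq hw₁)]
    exact hα₁
  have hvle : v ≤ 2 * μ := hv.2 hmem
  have hveq : v = 2 * μ := by
    obtain ⟨α, hαs, hαv⟩ := hv.1
    by_contra hc
    have hlt : v < 2 * μ := lt_of_le_of_ne hvle hc
    have hfS := low α (by omega)
    rw [hom α (by omega)] at hfS
    exact mem_support_iff.mp hαs hfS
  constructor
  · exact ⟨μ, by omega⟩
  · have hWPS : weightPart A v f = S := by
      apply MvPolynomial.ext
      intro α
      rw [coeff_weightPart]
      split_ifs with h
      · rw [low α (by omega)]
      · exact (hom α (by omega)).symm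
    rw [hWPS, hS]
    have hmm : Multiset.map (fun g => L g * L g) m
        = Multiset.map (fun g => g * g) (m.map L) := by
      rw [Multiset.map_map]; rfl
    rw [hmm]
    exact isSumSq_multiset (m.map L)
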